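/- Let N1 ≥ 1 be an integer and let n be an integer with 1 ≤ n ≤ N1. At Δ = 2n/(N1+1), the inner-subarray sum of the nested array has unit modulus: |Σ_{m=0}^{N1−1} exp(iπ m Δ)| = 1. -/

import Mathlib

open Finset

/-- at `Δ = 2n/(N1+1)` with `1 ≤ n ≤ N1`, the inner-subarray sum of the
nested array has unit modulus. -/
theorem nested_inner_subarray_unit_modulus (N1 : ℕ) (hN1 : 1 ≤ N1)
    (n : ℕ) (hn1 : 1 ≤ n) (hn2 : n ≤ N1) :
    ‖(∑ m ∈ Finset.range N1,
        Complex.exp (Complex.I * Real.pi * (m : ℝ) * (2 * (n : ℝ) / ((N1 : ℝ) + 1))))‖ = 1 := by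
  have hNne : ((N1 : ℂ) + 1) ≠ 0 := by
    exact_mod_cast (Nat.cast_add_one_ne_zero (R := ℂ) N1)
  set θ : ℝ := Real.pi * (2 * n / ((N1 : ℝ) + 1)) with hθ
  set w : ℂ := Complex.exp ((θ : ℂ) * Complex.I) with hw
  have habsw : ‖w‖ = 1 := Complex.norm_exp_ofReal_mul_I θ
  have hterm : ∀ m ∈ Finset.range N1,
      Complex.exp (Complex.I * Real.pi * (m : ℝ) * (2 * (n : ℝ) / ((N1 : ℝ) + 1))) = w ^ m := by
    intro m _
    rw [hw, ← Complex.exp_nat_mul]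
    congr 1
    simp [hθ]
    ring
  rw [Finset.sum_congr rfl hterm]
  have hpow : w ^ (N1 + 1) = 1 := by
    rw [hw, ← Complex.exp_nat_mul]
    rw [show ((N1 + 1 : ℕ) : ℂ) * ((θ : ℂ) * Complex.I) = (n : ℤ) * (2 * Real.pi * Complex.I) by
      simp [hθ]
      field_simp]
    exact Complex.exp_int_mul_two_pi_mul_I n
  have hwne : w ≠ 1 := by
    intro h
    rw [hw, Complex.exp_eq_one_iff] at h
    obtain ⟨k, hk⟩ := h
    have : (θ : ℂ) = (k : ℂ) * (2 * Real.pi) := by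
      have hk' : (θ : ℂ) * Complex.I = ((k : ℂ) * (2 * Real.pi)) * Complex.I := by
        rw [hk]; ring
      exact mul_right_cancel₀ Complex.I_ne_zero hk'
    have hθr : θ = (k : ℝ) * (2 * Real.pi) := by exact_mod_cast this
    have hπ : (0 : ℝ) < Real.pi := Real.pi_pos
    have hN : (0 : ℝ) < (N1 : ℝ) + 1 := by positivity
    have hnk : (n : ℝ) = (k : ℝ) * ((N1 : ℝ) + 1) := by
      have h1 : Real.pi * (2 * n / ((N1 : ℝ) + 1)) = (k : ℝ) * (2 * Real.pi) := by
        rw [← hθr]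
      field_simp at h1
      nlinarith [h1]
    have hnk' : (n : ℤ) = k * ((N1 : ℤ) + 1) := by exact_mod_cast hnk
    have h1 : (1 : ℤ) ≤ n := by exact_mod_cast hn1
    have h2 : (n : ℤ) ≤ N1 := by exact_mod_cast hn2
    rcases le_or_gt k 0 with hk0 | hk0
    · nlinarith
    · have : (1 : ℤ) ≤ k := hk0
      nlinarith
  have hfull : ∑ m ∈ Finset.range (N1 + 1), w ^ m = 0 := by
    have h := geom_sum_mul w (N1 + 1)
    rw [hpow, sub_self] at h
    exact (mul_eq_zero.mp h).resolve_right (sub_ne_zero.mpr hwne)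
  have hsum : ∑ m ∈ Finset.range N1, w ^ m = -w ^ N1 := by
    have := Finset.sum_range_succ (fun m => w ^ m) N1
    rw [hfull] at this
    linear_combination -this
  rw [hsum]
  rw [norm_neg, norm_pow, habsw, one_pow]
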